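/- Let G be a finite tree rooted at o and let e* be an edge maximizing |e|·|T_e|. Define g(e) = 1/|e*| for e on the root-path of the far endpoint of e*, and g(e) = 0 otherwise. Then ∑_{v∈V} (∑_{e∈ℓ(v)} g(e))² ≥ |T_{e*}| and ∑_{e∈E} g(e)² = 1/|e*|. Consequently, the best constant A in the Hardy inequality ∑_v (∑_{e∈ℓ(v)} g(e))² ≤ A ∑_e g(e)² satisfies A ≥ max_{e∈E} |e|·|T_e|. -/

import Mathlib

open Finset

/-- Edges on the path from `o` to `v` in a tree, encoded by their endpoints farther
from `o`: the vertices `u ≠ o` lying on the path from `o` to `v`. -/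
noncomputable def pathE {V : Type*} [Fintype V] [DecidableEq V] (G : SimpleGraph V) (o v : V) :
    Finset V :=
  Finset.univ.filter fun u => u ≠ o ∧ G.dist o u + G.dist u v = G.dist o v

/-- The vertex set `T_e` of the subtree hanging below the edge `e` encoded by `u`:
all vertices whose root-path passes through `u`. -/
noncomputable def subT {V : Type*} [Fintype V] [DecidableEq V] (G : SimpleGraph V) (o u : V) :
    Finset V :=
  Finset.univ.filter fun x => u ∈ pathE G o x

section Aux

variable {V : Type*} [Fintype V] [DecidableEq V] {G : SimpleGraph V}

lemma mem_pathE_iff_mem_support (hG : G.IsTree) {o v u : V} (p : G.Walk o v)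
    (hp : p.IsPath) (hl : p.length = G.dist o v) :
    u ∈ pathE G o v ↔ u ≠ o ∧ u ∈ p.support := by
  simp only [pathE, Finset.mem_filter, Finset.mem_univ, true_and]
  constructor
  · rintro ⟨hu, hdist⟩
    refine ⟨hu, ?_⟩
    obtain ⟨q₁, hq₁⟩ := hG.isConnected.exists_walk_length_eq_dist o u
    obtain ⟨q₂, hq₂⟩ := hG.isConnected.exists_walk_length_eq_dist u v
    have hlen : (q₁.append q₂).length = G.dist o v := by
      rw [SimpleGraph.Walk.length_append, hq₁, hq₂, hdist]
    have hpath : (q₁.append q₂).IsPath :=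
      SimpleGraph.Walk.isPath_of_length_eq_dist _ hlen
    have := (hG.existsUnique_path o v).unique hpath hp
    have hu' : u ∈ (q₁.append q₂).support := by
      rw [SimpleGraph.Walk.mem_support_append_iff]
      exact Or.inl q₁.end_mem_support
    rwa [this] at hu'
  · rintro ⟨hu, hmem⟩
    refine ⟨hu, ?_⟩
    have hspec := p.take_spec hmem
    have hlen : (p.takeUntil u hmem).length + (p.dropUntil u hmem).length
        = G.dist o v := by
      rw [← hl, ← SimpleGraph.Walk.length_append, hspec]
    have h1 : G.dist o u ≤ (p.takeUntil u hmem).length := SimpleGraph.dist_le _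
    have h2 : G.dist u v ≤ (p.dropUntil u hmem).length := SimpleGraph.dist_le _
    have h3 : G.dist o v ≤ G.dist o u + G.dist u v := hG.isConnected.dist_triangle
    omega

lemma card_pathE (hG : G.IsTree) (o v : V) :
    (pathE G o v).card = G.dist o v := by
  obtain ⟨p, hp, hl⟩ := hG.isConnected.exists_path_of_dist o v
  have hset : pathE G o v = p.support.toFinset.erase o := by
    ext u
    rw [mem_pathE_iff_mem_support hG p hp hl, Finset.mem_erase, List.mem_toFinset]
  rw [hset, Finset.card_erase_of_mem (by simp [p.start_mem_support]),
    List.toFinset_card_of_nodup hp.support_nodup, SimpleGraph.Walk.length_support, hl]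
  omega

lemma pathE_subset (hG : G.IsTree) {o v w : V} (hw : w ∈ pathE G o v) :
    pathE G o w ⊆ pathE G o v := by
  intro u hu
  simp only [pathE, Finset.mem_filter, Finset.mem_univ, true_and] at hu hw ⊢
  obtain ⟨hu1, hu2⟩ := hu
  obtain ⟨hw1, hw2⟩ := hw
  refine ⟨hu1, ?_⟩
  have h1 : G.dist o v ≤ G.dist o u + G.dist u v := hG.isConnected.dist_triangle
  have h2 : G.dist u v ≤ G.dist u w + G.dist w v := hG.isConnected.dist_triangle
  omega

end Aux

/-- Lower bound restated. -/

theorem hardy_constant_lower_bound {V : Type*} [Fintype V] [DecidableEq V]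
    (G : SimpleGraph V) (hG : G.IsTree) (o estar : V) (hestar : estar ≠ o)
    (hmax : ∀ u, u ≠ o →
      G.dist o u * (subT G o u).card ≤ G.dist o estar * (subT G o estar).card) :
    (((subT G o estar).card : ℝ) ≤ ∑ v : V, (∑ u ∈ pathE G o v,
        (if u ∈ pathE G o estar then (1 : ℝ) / (G.dist o estar) else 0)) ^ 2) ∧
    (∑ u ∈ Finset.univ.filter fun u => u ≠ o,
        (if u ∈ pathE G o estar then (1 : ℝ) / (G.dist o estar) else 0) ^ 2
      = 1 / (G.dist o estar)) ∧
    ∀ A : ℝ, (∀ g : V → ℝ, ∑ v : V, (∑ u ∈ pathE G o v, g u) ^ 2 ≤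
        A * ∑ u ∈ Finset.univ.filter fun u => u ≠ o, (g u) ^ 2) →
      ((G.dist o estar * (subT G o estar).card : ℕ) : ℝ) ≤ A := by
  set d : ℕ := G.dist o estar with hd_def
  have hd : 0 < d := by
    have : G.dist o estar ≠ 0 :=
      SimpleGraph.dist_ne_zero_iff_ne_and_reachable.mpr
        ⟨Ne.symm hestar, hG.isConnected o estar⟩
    omega
  have hdR : (0 : ℝ) < (d : ℝ) := by exact_mod_cast hd
  have hcard : (pathE G o estar).card = d := card_pathE hG o estar
  -- the inner sum is 1 for every vertex below estar
  have hinner : ∀ v, estar ∈ pathE G o v →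
      (∑ u ∈ pathE G o v, (if u ∈ pathE G o estar then (1 : ℝ) / d else 0)) = 1 := by
    intro v hv
    rw [Finset.sum_ite_mem,
      Finset.inter_eq_right.mpr (pathE_subset hG hv), Finset.sum_const, hcard,
      nsmul_eq_mul]
    field_simp
  have hsub : ∀ v, v ∈ subT G o estar ↔ estar ∈ pathE G o v := by
    intro v; simp [subT]
  -- part 1
  have part1 : (((subT G o estar).card : ℝ) ≤ ∑ v : V, (∑ u ∈ pathE G o v,
      (if u ∈ pathE G o estar then (1 : ℝ) / d else 0)) ^ 2) := by
    have h1 : ∑ v ∈ subT G o estar, (∑ u ∈ pathE G o v,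
        (if u ∈ pathE G o estar then (1 : ℝ) / d else 0)) ^ 2
        = ((subT G o estar).card : ℝ) := by
      rw [Finset.sum_congr rfl (fun v hv => by
        rw [hinner v ((hsub v).mp hv), one_pow])]
      simp
    calc ((subT G o estar).card : ℝ)
        = ∑ v ∈ subT G o estar, (∑ u ∈ pathE G o v,
            (if u ∈ pathE G o estar then (1 : ℝ) / d else 0)) ^ 2 := h1.symm
      _ ≤ ∑ v : V, (∑ u ∈ pathE G o v,
            (if u ∈ pathE G o estar then (1 : ℝ) / d else 0)) ^ 2 :=
          Finset.sum_le_sum_of_subset_of_nonneg (Finset.subset_univ _)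
            (fun v _ _ => sq_nonneg _)
  -- part 2
  have hpe_sub : pathE G o estar ⊆ Finset.univ.filter fun u => u ≠ o := by
    intro u hu
    simp only [pathE, Finset.mem_filter, Finset.mem_univ, true_and] at hu ⊢
    exact hu.1
  have part2 : (∑ u ∈ Finset.univ.filter fun u => u ≠ o,
      (if u ∈ pathE G o estar then (1 : ℝ) / d else 0) ^ 2 = 1 / d) := by
    have : ∀ u : V, (if u ∈ pathE G o estar then (1 : ℝ) / d else 0) ^ 2
        = if u ∈ pathE G o estar then ((1 : ℝ) / d) ^ 2 else 0 := by
      intro u; split <;> simp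
    rw [Finset.sum_congr rfl fun u _ => this u, Finset.sum_ite_mem,
      Finset.inter_eq_right.mpr hpe_sub, Finset.sum_const, hcard, nsmul_eq_mul]
    field_simp
  refine ⟨part1, part2, ?_⟩
  intro A hA
  have H := hA (fun u => if u ∈ pathE G o estar then (1 : ℝ) / d else 0)
  rw [part2] at H
  have h3 : ((subT G o estar).card : ℝ) ≤ A * (1 / d) := le_trans part1 H
  push_cast
  rw [mul_comm]
  calc ((subT G o estar).card : ℝ) * d ≤ (A * (1 / d)) * d := by
        exact mul_le_mul_of_nonneg_right h3 hdR.le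
    _ = A := by field_simp
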